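/- Let G be a graph such that G and its complement are both induced-minor-minimal non-2-cographs. Then either G or its complement is critically 2-connected, or both G and its complement have vertex connectivity exactly two. -/
import Mathlib


/-- A graph is 2-connected if it has at least 3 vertices, is connected,
and remains connected after deleting any single vertex. -/
def TwoConnected {V : Type} [Fintype V] (G : SimpleGraph V) : Prop :=
  3 ≤ Fintype.card V ∧ G.Connected ∧
    ∀ v : V, (G.induce ({v}ᶜ : Set V)).Connected

/-- A graph is a 2-cograph if it has no induced subgraph `H` such that
both `H` and its complement are 2-connected. -/
def IsTwoCograph {V : Type} [Fintype V] (G : SimpleGraph V) : Prop :=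
  ∀ S : Finset V, ¬ (TwoConnected (G.induce (S : Set V)) ∧
      TwoConnected ((G.induce (S : Set V))ᶜ))

/-- `H` is an induced minor of `G`: witnessed by pairwise disjoint nonempty
connected branch sets, with adjacency in `H` iff there is an edge between
the corresponding branch sets. -/
def IsInducedMinor {V W : Type} (G : SimpleGraph V) (H : SimpleGraph W) : Prop :=
  ∃ B : W → Set V,
    (∀ w, (B w).Nonempty) ∧
    (∀ w, (G.induce (B w)).Connected) ∧
    (Pairwise fun w w' => Disjoint (B w) (B w')) ∧
    ∀ w w', w ≠ w' → (H.Adj w w' ↔ ∃ a ∈ B w, ∃ b ∈ B w', G.Adj a b)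

/-- `G` is an induced-minor-minimal non-2-cograph: `G` is not a 2-cograph but
every proper induced minor of `G` (one with fewer vertices) is a 2-cograph. -/
def IsIMMNon2Cograph {V : Type} [Fintype V] (G : SimpleGraph V) : Prop :=
  ¬ IsTwoCograph G ∧
    ∀ (W : Type) [Fintype W], ∀ H : SimpleGraph W,
      IsInducedMinor G H → Fintype.card W < Fintype.card V → IsTwoCograph H

/-- A 2-connected graph is critically 2-connected if deleting any single
vertex leaves a graph that is not 2-connected. -/
def CriticallyTwoConnected {V : Type} [Fintype V] [DecidableEq V] (G : SimpleGraph V) : Prop :=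
  TwoConnected G ∧ ∀ v : V, ¬ TwoConnected (G.induce ({v}ᶜ : Set V))

/-- `G` has vertex connectivity exactly two: it is 2-connected and has a
2-element vertex cut. -/
def HasConnectivityTwo {V : Type} [Fintype V] [DecidableEq V] (G : SimpleGraph V) : Prop :=
  TwoConnected G ∧ ∃ s t : V, s ≠ t ∧ ¬ (G.induce (({s, t} : Set V)ᶜ)).Connected

open SimpleGraph

variable {V : Type}

lemma compl_induce (G : SimpleGraph V) (s : Set V) : (G.induce s)ᶜ = Gᶜ.induce s := by
  ext a b
  simp [compl_adj, Subtype.ext_iff, and_comm]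

noncomputable def induceInduceIso (G : SimpleGraph V) (s : Set V) (t : Set s) :
    (G.induce s).induce t ≃g G.induce (Subtype.val '' t) where
  toEquiv := Equiv.Set.image Subtype.val t Subtype.val_injective
  map_rel_iff' := by
    intro a b
    simp [Equiv.Set.image, Equiv.Set.imageOfInjOn]

lemma val_image_compl_singleton {s : Set V} (w : s) :
    Subtype.val '' ({w}ᶜ : Set s) = s ∩ ({(w : V)}ᶜ) := by
  ext x
  constructor
  · rintro ⟨a, ha, rfl⟩
    exact ⟨a.2, by simpa [Subtype.ext_iff] using ha⟩
  · rintro ⟨hx, hxw⟩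
    exact ⟨⟨x, hx⟩, by simpa [Subtype.ext_iff] using hxw, rfl⟩

lemma connected_induce_singleton (G : SimpleGraph V) (a : V) :
    (G.induce ({a} : Set V)).Connected := by
  rw [SimpleGraph.connected_iff]
  refine ⟨?_, ⟨⟨a, rfl⟩⟩⟩
  intro x y
  have : x = y := Subtype.ext (x.2.trans y.2.symm)
  exact this ▸ SimpleGraph.Reachable.refl _

lemma induce_isInducedMinor (G : SimpleGraph V) (s : Set V) :
    IsInducedMinor G (G.induce s) := by
  refine ⟨fun w => {(w : V)}, fun w => ⟨w, rfl⟩, fun w => connected_induce_singleton G _, ?_, ?_⟩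
  · intro w w' h
    simpa [Set.disjoint_singleton] using Subtype.val_injective.ne h
  · intro w w' hne
    simp

lemma adj_of_connected_two {W : Type} {H : SimpleGraph W} (h : H.Connected) {x y : W}
    (hxy : x ≠ y) (hall : ∀ z : W, z = x ∨ z = y) : H.Adj x y := by
  obtain ⟨wlk⟩ := h.preconnected x y
  cases wlk with
  | nil => exact absurd rfl hxy
  | @cons _ c _ hadj p =>
    rcases hall c with rfl | rfl
    · exact absurd hadj H.irrefl
    · exact hadj

lemma twoConnected_induce_univ [Fintype V] (G : SimpleGraph V) :
    TwoConnected (G.induce (Set.univ : Set V)) ↔ TwoConnected G := by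
  have hcard : Fintype.card ↥(Set.univ : Set V) = Fintype.card V :=
    Fintype.card_congr (Equiv.Set.univ V)
  constructor
  · rintro ⟨h1, h2, h3⟩
    refine ⟨hcard ▸ h1, (induceUnivIso G).connected_iff.mp h2, fun v => ?_⟩
    have h := h3 ⟨v, trivial⟩
    rw [(induceInduceIso G Set.univ _).connected_iff,
      val_image_compl_singleton, Set.univ_inter] at h
    exact h
  · rintro ⟨h1, h2, h3⟩
    refine ⟨hcard ▸ h1, (induceUnivIso G).connected_iff.mpr h2, fun v => ?_⟩
    rw [(induceInduceIso G Set.univ _).connected_iff,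
      val_image_compl_singleton, Set.univ_inter]
    exact h3 ↑v

lemma twoConnected_congr {V : Type} (G : SimpleGraph V) {s t : Set V}
    (inst1 : Fintype ↥s) (inst2 : Fintype ↥t) (h : s = t) :
    @TwoConnected _ inst1 (G.induce s) ↔ @TwoConnected _ inst2 (G.induce t) := by
  subst h
  rw [Subsingleton.elim inst1 inst2]

lemma step {V : Type} [Fintype V] [DecidableEq V] (G : SimpleGraph V)
    (hmin : ∀ (W : Type) [Fintype W], ∀ H : SimpleGraph W,
      IsInducedMinor G H → Fintype.card W < Fintype.card V → IsTwoCograph H)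
    (h2Gc : TwoConnected Gᶜ) (hV : 4 ≤ Fintype.card V)
    (v : V) (hv : TwoConnected (G.induce ({v}ᶜ : Set V))) :
    HasConnectivityTwo Gᶜ := by
  have hc1 : Fintype.card ↥({v}ᶜ : Set V) = Fintype.card V - 1 := by
    rw [Fintype.card_compl_set, Set.card_singleton]
  have hcardlt : Fintype.card ↥({v}ᶜ : Set V) < Fintype.card V := by omega
  have hco : IsTwoCograph (G.induce ({v}ᶜ : Set V)) :=
    hmin _ (G.induce ({v}ᶜ : Set V)) (induce_isInducedMinor G _) hcardlt
  have hU := hco Finset.univ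
  have hB : ¬ TwoConnected (Gᶜ.induce ({v}ᶜ : Set V)) := by
    intro h
    apply hU
    refine ⟨(twoConnected_congr _ _ _ (Finset.coe_univ)).mpr
      ((twoConnected_induce_univ _).mpr hv), ?_⟩
    rw [compl_induce]
    refine (twoConnected_congr _ _ _ (Finset.coe_univ)).mpr
      ((twoConnected_induce_univ _).mpr ?_)
    rw [compl_induce]
    exact h
  have hc3 : 3 ≤ Fintype.card ↥({v}ᶜ : Set V) := by omega
  have hconn : (Gᶜ.induce ({v}ᶜ : Set V)).Connected := h2Gc.2.2 v
  have hex : ∃ w : ↥({v}ᶜ : Set V),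
      ¬ ((Gᶜ.induce ({v}ᶜ : Set V)).induce ({w}ᶜ)).Connected := by
    by_contra h
    push_neg at h
    exact hB ⟨hc3, hconn, h⟩
  obtain ⟨w, hw⟩ := hex
  refine ⟨h2Gc, v, ↑w, fun h => w.2 h.symm, fun hcon => ?_⟩
  apply hw
  rw [(induceInduceIso Gᶜ _ _).connected_iff, val_image_compl_singleton]
  rw [Set.insert_eq, Set.compl_union] at hcon
  exact hcon

theorem two_cases_induced_minor_minimal {V : Type} [Fintype V] [DecidableEq V]
    (G : SimpleGraph V) (hG : IsIMMNon2Cograph G) (hGc : IsIMMNon2Cograph Gᶜ) :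
    (CriticallyTwoConnected G ∨ CriticallyTwoConnected Gᶜ) ∨
      (HasConnectivityTwo G ∧ HasConnectivityTwo Gᶜ) := by
  -- Step 1: G and Gᶜ are 2-connected.
  obtain ⟨S, hS1, hS2⟩ := not_forall_not.mp hG.1
  have hmain : TwoConnected G ∧ TwoConnected Gᶜ := by
    by_cases hSu : S = Finset.univ
    · subst hSu
      constructor
      · exact (twoConnected_induce_univ G).mp
          ((twoConnected_congr G _ _ Finset.coe_univ).mp hS1)
      · rw [compl_induce] at hS2
        exact (twoConnected_induce_univ Gᶜ).mp
          ((twoConnected_congr Gᶜ _ _ Finset.coe_univ).mp hS2)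
    · exfalso
      have hlt : Fintype.card ↥(S : Set V) < Fintype.card V := by
        have h1 : Fintype.card ↥(S : Set V) = S.card := by simp
        have := Finset.card_lt_card (Finset.ssubset_univ_iff.mpr hSu)
        simpa [h1] using this
      have hco := hG.2 _ (G.induce (S : Set V)) (induce_isInducedMinor G _) hlt
      apply hco Finset.univ
      constructor
      · exact (twoConnected_congr _ _ _ Finset.coe_univ).mpr
          ((twoConnected_induce_univ _).mpr hS1)
      · rw [compl_induce]
        exact (twoConnected_congr _ _ _ Finset.coe_univ).mpr
          ((twoConnected_induce_univ _).mpr (by rw [compl_induce] at hS2 ⊢; exact hS2))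
  obtain ⟨h2G, h2Gc⟩ := hmain
  -- Step 2: |V| ≥ 4.
  have h3 : 3 ≤ Fintype.card V := h2G.1
  have h4 : 4 ≤ Fintype.card V := by
    by_contra hlt
    have h3' : Fintype.card V = 3 := by omega
    have hne : Nonempty V := Fintype.card_pos_iff.mp (by omega)
    obtain ⟨v⟩ := hne
    have hcc : Nat.card ↥({v}ᶜ : Set V) = 2 := by
      rw [Nat.card_eq_fintype_card, Fintype.card_compl_set, Set.card_singleton, h3']
    obtain ⟨x, y, hxy, hU⟩ := Nat.card_eq_two_iff.mp hcc
    have hall : ∀ z : ↥({v}ᶜ : Set V), z = x ∨ z = y := by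
      intro z
      have : z ∈ ({x, y} : Set ↥({v}ᶜ : Set V)) := hU ▸ Set.mem_univ z
      simpa using this
    have a1 : (G.induce ({v}ᶜ : Set V)).Adj x y :=
      adj_of_connected_two (h2G.2.2 v) hxy hall
    have a2 : (Gᶜ.induce ({v}ᶜ : Set V)).Adj x y :=
      adj_of_connected_two (h2Gc.2.2 v) hxy hall
    have a1' : G.Adj ↑x ↑y := a1
    have a2' : Gᶜ.Adj ↑x ↑y := a2
    exact a2'.2 a1'
  -- Step 3: case analysis.
  by_cases hc1 : CriticallyTwoConnected G
  · exact Or.inl (Or.inl hc1)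
  by_cases hc2 : CriticallyTwoConnected Gᶜ
  · exact Or.inl (Or.inr hc2)
  right
  have e1 : ∃ v, TwoConnected (G.induce ({v}ᶜ : Set V)) := by
    by_contra h
    push_neg at h
    exact hc1 ⟨h2G, fun v => h v⟩
  have e2 : ∃ w, TwoConnected (Gᶜ.induce ({w}ᶜ : Set V)) := by
    by_contra h
    push_neg at h
    exact hc2 ⟨h2Gc, fun w => h w⟩
  obtain ⟨v, hv⟩ := e1
  obtain ⟨w, hw⟩ := e2
  constructor
  · have := step Gᶜ hGc.2 (by rw [compl_compl]; exact h2G) h4 w hw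
    rwa [compl_compl] at this
  · exact step G hG.2 h2Gc h4 v hv
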